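/- Let μ > 0 and let p ∈ V_μ with CDF F_n = ∑_{m≤n} p_m. Then G[p] = 1 − (1/μ) ∑_{n≥0} (1 − F_n)². -/

import Mathlib

open scoped ENNReal

/-- Cumulative distribution function of a pmf on ℕ: `F n = ∑_{m ≤ n} p m`. -/
noncomputable def cdf (p : ℕ → ℝ) (n : ℕ) : ℝ := ∑ m ∈ Finset.range (n + 1), p m

/-- Wasserstein-1 distance between two pmfs on ℕ, `W1(p,q) = ∑_{n ≥ 0} |F_n - H_n|`. -/
noncomputable def W1 (p q : ℕ → ℝ) : ℝ := ∑' n : ℕ, |cdf p n - cdf q n|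

/-- Gini index of a pmf on ℕ with mean μ: `G[p] = (1/(2μ)) ∑_i ∑_j |i-j| p_i p_j`. -/
noncomputable def Gini (μ : ℝ) (p : ℕ → ℝ) : ℝ :=
  (1 / (2 * μ)) * ∑' i : ℕ, ∑' j : ℕ, |(i : ℝ) - (j : ℝ)| * p i * p j

/-- The shifted Bernoulli distribution with mean μ:
`p*_{⌊μ⌋} = 1 - μ + ⌊μ⌋`, `p*_{⌊μ⌋+1} = μ - ⌊μ⌋`, `p*_n = 0` otherwise. -/
noncomputable def pstar (μ : ℝ) : ℕ → ℝ := fun n =>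
  if n = ⌊μ⌋₊ then 1 - μ + (⌊μ⌋₊ : ℝ)
  else if n = ⌊μ⌋₊ + 1 then μ - (⌊μ⌋₊ : ℝ)
  else 0

/-- The Dirac distribution on ℕ concentrated at `k`. -/
noncomputable def dirac (k : ℕ) : ℕ → ℝ := fun n => if n = k then 1 else 0

private lemma cnt_aux (i j : ℕ) :
    ∑' n : ℕ, (if i ≤ n ∧ n < j then (1 : ℝ≥0∞) else 0) = ((j - i : ℕ) : ℝ≥0∞) := by
  rw [tsum_eq_sum (s := Finset.Ico i j)
    (fun b hb => if_neg (by rwa [Finset.mem_Ico] at hb))]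
  rw [Finset.sum_congr rfl (fun b hb => if_pos (Finset.mem_Ico.1 hb))]
  simp [Nat.card_Ico]

private lemma abs_aux (i j : ℕ) :
    ENNReal.ofReal |(i : ℝ) - (j : ℝ)| = (((j - i) + (i - j) : ℕ) : ℝ≥0∞) := by
  have h : |(i : ℝ) - (j : ℝ)| = (((j - i) + (i - j) : ℕ) : ℝ) := by
    rcases le_total i j with h | h
    · rw [Nat.sub_eq_zero_of_le h,
        abs_of_nonpos (sub_nonpos.2 (Nat.cast_le.2 h))]
      push_cast [h]; ring
    · rw [Nat.sub_eq_zero_of_le h,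
        abs_of_nonneg (sub_nonneg.2 (Nat.cast_le.2 h))]
      push_cast [h]; ring
  rw [h, ENNReal.ofReal_natCast]

theorem stmt_17 (μ : ℝ) (hμ : 0 < μ) (p : ℕ → ℝ)
    (hpos : ∀ n, 0 ≤ p n) (hsum : HasSum p 1)
    (hmean : HasSum (fun n : ℕ => (n : ℝ) * p n) μ) :
    Gini μ p = 1 - (1 / μ) * ∑' n : ℕ, (1 - cdf p n) ^ 2 := by
  set q : ℕ → ℝ≥0∞ := fun n => ENNReal.ofReal (p n) with hq_def
  have hq_ne : ∀ n, q n ≠ ∞ := fun n => ENNReal.ofReal_ne_top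
  have hq_toReal : ∀ n, (q n).toReal = p n := fun n => ENNReal.toReal_ofReal (hpos n)
  have hq1 : ∑' n, q n = 1 := by
    rw [← ENNReal.ofReal_tsum_of_nonneg hpos hsum.summable, hsum.tsum_eq,
      ENNReal.ofReal_one]
  -- cdf facts
  have hcdf_nonneg : ∀ n, 0 ≤ cdf p n := fun n =>
    Finset.sum_nonneg fun m _ => hpos m
  have hcdf_le : ∀ n, cdf p n ≤ 1 := by
    intro n
    have := Summable.sum_le_tsum (Finset.range (n + 1)) (fun i _ => hpos i) hsum.summable
    rwa [hsum.tsum_eq] at this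
  -- SF and ST
  set SF : ℕ → ℝ≥0∞ := fun n => ∑' i : ℕ, (if i ≤ n then q i else 0) with hSF_def
  set ST : ℕ → ℝ≥0∞ := fun n => ∑' j : ℕ, (if n < j then q j else 0) with hST_def
  have hSF : ∀ n, SF n = ENNReal.ofReal (cdf p n) := by
    intro n
    rw [hSF_def]
    simp only []
    rw [tsum_eq_sum (s := Finset.range (n + 1))
      (fun b hb => if_neg (by simpa using Finset.mem_range_succ_iff.not.1 hb))]
    rw [Finset.sum_congr rfl (fun b hb => if_pos (Finset.mem_range_succ_iff.1 hb))]
    rw [cdf, ENNReal.ofReal_sum_of_nonneg (fun i _ => hpos i)]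
  have hadd : ∀ n, SF n + ST n = 1 := by
    intro n
    rw [hSF_def, hST_def, ← ENNReal.tsum_add, ← hq1]
    refine tsum_congr fun i => ?_
    rcases le_or_gt i n with h | h
    · rw [if_pos h, if_neg (not_lt.2 h), add_zero]
    · rw [if_neg (not_le.2 h), if_pos h, zero_add]
  have hSF_ne : ∀ n, SF n ≠ ∞ := fun n => by rw [hSF n]; exact ENNReal.ofReal_ne_top
  have hST_eq : ∀ n, ST n = ENNReal.ofReal (1 - cdf p n) := by
    intro n
    have h1 : ST n = 1 - SF n := by
      rw [← hadd n]; exact (ENNReal.add_sub_cancel_left (hSF_ne n)).symm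
    rw [h1, hSF n, ENNReal.ofReal_sub 1 (hcdf_nonneg n), ENNReal.ofReal_one]
  have hST_ne : ∀ n, ST n ≠ ∞ := fun n => by rw [hST_eq n]; exact ENNReal.ofReal_ne_top
  have hST_le1 : ∀ n, ST n ≤ 1 := fun n => by
    rw [← hadd n]; exact le_add_self
  have hSF_eq : ∀ n, SF n = 1 - ST n := fun n =>
    ENNReal.eq_sub_of_add_eq (hST_ne n) (hadd n)
  -- mean in ENNReal
  have hmq : ∑' m : ℕ, (m : ℝ≥0∞) * q m = ENNReal.ofReal μ := by
    rw [← hmean.tsum_eq, ENNReal.ofReal_tsum_of_nonneg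
      (fun m => mul_nonneg (Nat.cast_nonneg m) (hpos m)) hmean.summable]
    refine tsum_congr fun m => ?_
    rw [ENNReal.ofReal_mul (Nat.cast_nonneg m), ENNReal.ofReal_natCast]
  have hST_sum : ∑' n, ST n = ENNReal.ofReal μ := by
    rw [hST_def]
    simp only []
    rw [ENNReal.tsum_comm, ← hmq]
    refine tsum_congr fun m => ?_
    have h1 : ∀ n : ℕ, (if n < m then q m else 0)
        = (if 0 ≤ n ∧ n < m then (1 : ℝ≥0∞) else 0) * q m := by
      intro n
      rcases lt_or_ge n m with h | h
      · rw [if_pos h, if_pos ⟨Nat.zero_le n, h⟩, one_mul]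
      · rw [if_neg (not_lt.2 h), if_neg (fun hc => (not_lt.2 h) hc.2), zero_mul]
    calc ∑' n : ℕ, (if n < m then q m else 0)
        = ∑' n : ℕ, (if 0 ≤ n ∧ n < m then (1 : ℝ≥0∞) else 0) * q m :=
          tsum_congr h1
      _ = ((m - 0 : ℕ) : ℝ≥0∞) * q m := by rw [ENNReal.tsum_mul_right, cnt_aux]
      _ = (m : ℝ≥0∞) * q m := by rw [Nat.sub_zero]
  -- key identity in ENNReal
  have hA : ∀ i j : ℕ, ENNReal.ofReal |(i : ℝ) - (j : ℝ)| * (q i * q j)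
      = ∑' n : ℕ, ((if i ≤ n ∧ n < j then (1 : ℝ≥0∞) else 0) * (q i * q j)
          + (if j ≤ n ∧ n < i then (1 : ℝ≥0∞) else 0) * (q i * q j)) := by
    intro i j
    rw [ENNReal.tsum_add, ENNReal.tsum_mul_right, ENNReal.tsum_mul_right, cnt_aux, cnt_aux,
      ← add_mul, abs_aux, Nat.cast_add]
  have hS : (∑' i : ℕ, ∑' j : ℕ, ENNReal.ofReal |(i : ℝ) - (j : ℝ)| * q i * q j)
      = ∑' n : ℕ, 2 * (SF n * ST n) := by
    calc (∑' i : ℕ, ∑' j : ℕ, ENNReal.ofReal |(i : ℝ) - (j : ℝ)| * q i * q j)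
        = ∑' i : ℕ, ∑' j : ℕ, ∑' n : ℕ,
            ((if i ≤ n ∧ n < j then (1 : ℝ≥0∞) else 0) * (q i * q j)
            + (if j ≤ n ∧ n < i then (1 : ℝ≥0∞) else 0) * (q i * q j)) := by
          refine tsum_congr fun i => tsum_congr fun j => ?_
          rw [mul_assoc]; exact hA i j
      _ = ∑' n : ℕ, ∑' i : ℕ, ∑' j : ℕ,
            ((if i ≤ n ∧ n < j then (1 : ℝ≥0∞) else 0) * (q i * q j)
            + (if j ≤ n ∧ n < i then (1 : ℝ≥0∞) else 0) * (q i * q j)) := by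
          rw [show (∑' i : ℕ, ∑' j : ℕ, ∑' n : ℕ,
              ((if i ≤ n ∧ n < j then (1 : ℝ≥0∞) else 0) * (q i * q j)
              + (if j ≤ n ∧ n < i then (1 : ℝ≥0∞) else 0) * (q i * q j)))
            = (∑' i : ℕ, ∑' n : ℕ, ∑' j : ℕ,
              ((if i ≤ n ∧ n < j then (1 : ℝ≥0∞) else 0) * (q i * q j)
              + (if j ≤ n ∧ n < i then (1 : ℝ≥0∞) else 0) * (q i * q j)))
            from tsum_congr fun i => ENNReal.tsum_comm]
          exact ENNReal.tsum_comm
      _ = ∑' n : ℕ, 2 * (SF n * ST n) := by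
          refine tsum_congr fun n => ?_
          have t1 : ∀ i j : ℕ, (if i ≤ n ∧ n < j then (1 : ℝ≥0∞) else 0) * (q i * q j)
              = (if i ≤ n then q i else 0) * (if n < j then q j else 0) := by
            intro i j
            by_cases h1 : i ≤ n <;> by_cases h2 : n < j <;> simp [h1, h2]
          have t2 : ∀ i j : ℕ, (if j ≤ n ∧ n < i then (1 : ℝ≥0∞) else 0) * (q i * q j)
              = (if n < i then q i else 0) * (if j ≤ n then q j else 0) := by
            intro i j
            by_cases h1 : j ≤ n <;> by_cases h2 : n < i <;>
              simp [h1, h2, mul_comm (q i) (q j)]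
          calc ∑' i : ℕ, ∑' j : ℕ,
                ((if i ≤ n ∧ n < j then (1 : ℝ≥0∞) else 0) * (q i * q j)
                + (if j ≤ n ∧ n < i then (1 : ℝ≥0∞) else 0) * (q i * q j))
              = ∑' i : ℕ, ((if i ≤ n then q i else 0) * ST n
                + (if n < i then q i else 0) * SF n) := by
                refine tsum_congr fun i => ?_
                rw [ENNReal.tsum_add]
                congr 1
                · rw [show (∑' j : ℕ, (if i ≤ n ∧ n < j then (1 : ℝ≥0∞) else 0) * (q i * q j))
                    = ∑' j : ℕ, (if i ≤ n then q i else 0) * (if n < j then q j else 0)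
                    from tsum_congr fun j => t1 i j, ENNReal.tsum_mul_left, hST_def]
                · rw [show (∑' j : ℕ, (if j ≤ n ∧ n < i then (1 : ℝ≥0∞) else 0) * (q i * q j))
                    = ∑' j : ℕ, (if n < i then q i else 0) * (if j ≤ n then q j else 0)
                    from tsum_congr fun j => t2 i j, ENNReal.tsum_mul_left, hSF_def]
            _ = SF n * ST n + ST n * SF n := by
                rw [ENNReal.tsum_add, ENNReal.tsum_mul_right, ENNReal.tsum_mul_right,
                  hSF_def, hST_def]
            _ = 2 * (SF n * ST n) := by ring
  -- finiteness of inner sums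
  have habs_le : ∀ i j : ℕ, ENNReal.ofReal |(i : ℝ) - (j : ℝ)| ≤ (i : ℝ≥0∞) + (j : ℝ≥0∞) := by
    intro i j
    rw [abs_aux]
    calc (((j - i) + (i - j) : ℕ) : ℝ≥0∞) ≤ ((i + j : ℕ) : ℝ≥0∞) :=
          Nat.cast_le.2 (by omega)
      _ = (i : ℝ≥0∞) + (j : ℝ≥0∞) := by rw [Nat.cast_add]
  have hfin : ∀ i : ℕ, (∑' j : ℕ, ENNReal.ofReal |(i : ℝ) - (j : ℝ)| * q i * q j) ≠ ∞ := by
    intro i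
    have hb : ∀ j : ℕ, ENNReal.ofReal |(i : ℝ) - (j : ℝ)| * q i * q j
        ≤ q i * ((i : ℝ≥0∞) * q j + (j : ℝ≥0∞) * q j) := by
      intro j
      calc ENNReal.ofReal |(i : ℝ) - (j : ℝ)| * q i * q j
          ≤ ((i : ℝ≥0∞) + (j : ℝ≥0∞)) * q i * q j := by
            exact mul_le_mul_left (mul_le_mul_left (habs_le i j) _) _
        _ = q i * ((i : ℝ≥0∞) * q j + (j : ℝ≥0∞) * q j) := by ring
    refine ne_top_of_le_ne_top ?_ (ENNReal.tsum_le_tsum hb)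
    rw [ENNReal.tsum_mul_left, ENNReal.tsum_add, ENNReal.tsum_mul_left, hq1, hmq]
    exact ENNReal.mul_ne_top (hq_ne i) (ENNReal.add_ne_top.2
      ⟨ENNReal.mul_ne_top (ENNReal.natCast_ne_top i) ENNReal.one_ne_top,
        ENNReal.ofReal_ne_top⟩)
  -- convert the real double sum
  have hinner : ∀ i : ℕ, (∑' j : ℕ, |(i : ℝ) - (j : ℝ)| * p i * p j)
      = (∑' j : ℕ, ENNReal.ofReal |(i : ℝ) - (j : ℝ)| * q i * q j).toReal := by
    intro i
    rw [ENNReal.tsum_toReal_eq (fun j => ENNReal.mul_ne_top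
      (ENNReal.mul_ne_top ENNReal.ofReal_ne_top (hq_ne i)) (hq_ne j))]
    refine tsum_congr fun j => ?_
    rw [ENNReal.toReal_mul, ENNReal.toReal_mul, ENNReal.toReal_ofReal (abs_nonneg _),
      hq_toReal, hq_toReal]
  have houter : (∑' i : ℕ, ∑' j : ℕ, |(i : ℝ) - (j : ℝ)| * p i * p j)
      = (∑' i : ℕ, ∑' j : ℕ, ENNReal.ofReal |(i : ℝ) - (j : ℝ)| * q i * q j).toReal := by
    rw [ENNReal.tsum_toReal_eq hfin]
    exact tsum_congr hinner
  -- the sum of squares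
  have ht_le : ∀ n, ST n * ST n ≤ ST n := fun n => by
    calc ST n * ST n ≤ 1 * ST n := mul_le_mul_left (hST_le1 n) _
      _ = ST n := one_mul _
  have ht_ne : (∑' n, ST n * ST n) ≠ ∞ :=
    ne_top_of_le_ne_top (by rw [hST_sum]; exact ENNReal.ofReal_ne_top)
      (ENNReal.tsum_le_tsum ht_le)
  have hFT : ∀ n, SF n * ST n = ST n - ST n * ST n := by
    intro n
    rw [hSF_eq n, ENNReal.sub_mul (fun _ _ => hST_ne n), one_mul]
  have hSsum : (∑' n : ℕ, 2 * (SF n * ST n))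
      = 2 * (ENNReal.ofReal μ - ∑' n, ST n * ST n) := by
    rw [ENNReal.tsum_mul_left]
    congr 1
    rw [show (∑' n, SF n * ST n) = ∑' n, (ST n - ST n * ST n) from tsum_congr hFT,
      ENNReal.tsum_sub ht_ne ht_le, hST_sum]
  have hrhs : (∑' n : ℕ, (1 - cdf p n) ^ 2) = (∑' n, ST n * ST n).toReal := by
    rw [ENNReal.tsum_toReal_eq (fun n => ENNReal.mul_ne_top (hST_ne n) (hST_ne n))]
    refine tsum_congr fun n => ?_
    rw [ENNReal.toReal_mul, hST_eq n, ENNReal.toReal_ofReal (sub_nonneg.2 (hcdf_le n)), sq]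
  have hfinal : (∑' i : ℕ, ∑' j : ℕ, ENNReal.ofReal |(i : ℝ) - (j : ℝ)| * q i * q j).toReal
      = 2 * (μ - (∑' n, ST n * ST n).toReal) := by
    rw [hS, hSsum, ENNReal.toReal_mul,
      ENNReal.toReal_sub_of_le
        (le_trans (ENNReal.tsum_le_tsum ht_le) (le_of_eq hST_sum)) ENNReal.ofReal_ne_top,
      ENNReal.toReal_ofReal hμ.le]
    norm_num
  unfold Gini
  rw [houter, hfinal, hrhs]
  field_simp
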